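/- Suppose 0 < 1/n ≪ c, ξ ≪ 1, n is a multiple of 3, and G is an oriented graph on n vertices with δ⁰(G) ≥ (1/2 - c)n. If there exists a partition {V₁, V₂, V₃} of V(G) with |V₁| ≡ |V₂| ≡ |V₃| (mod 3) such that for every i ∈ {1,2,3} and every v ∈ Vᵢ we have d⁺(v, V_{i+1}) ≥ (1/3 - ξ)n and d⁻(v, V_{i-1}) ≥ (1/3 - ξ)n (indices mod 3), then G has a cyclic triangle factor. -/

import Mathlib

open Finset
open scoped Classical

/-- An oriented graph: no loops and no pair of antiparallel edges. -/
def IsOriented {n : ℕ} (G : Fin n → Fin n → Prop) : Prop :=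
  (∀ v, ¬ G v v) ∧ ∀ u v : Fin n, G u v → ¬ G v u

/-- `d⁺(v, A)`: number of out-neighbors of `v` in `A`. -/
noncomputable def outDegOn {n : ℕ} (G : Fin n → Fin n → Prop) (v : Fin n)
    (A : Finset (Fin n)) : ℕ :=
  (A.filter fun u => G v u).card

/-- `d⁻(v, A)`: number of in-neighbors of `v` in `A`. -/
noncomputable def inDegOn {n : ℕ} (G : Fin n → Fin n → Prop) (v : Fin n)
    (A : Finset (Fin n)) : ℕ :=
  (A.filter fun u => G u v).card

/-- outdegree `d⁺(v)`. -/
noncomputable def outDeg {n : ℕ} (G : Fin n → Fin n → Prop) (v : Fin n) : ℕ :=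
  outDegOn G v univ

/-- indegree `d⁻(v)`. -/
noncomputable def inDeg {n : ℕ} (G : Fin n → Fin n → Prop) (v : Fin n) : ℕ :=
  inDegOn G v univ

/-- The minimum semidegree condition `δ⁰(G) ≥ b`. -/
def MinSemidegreeGE {n : ℕ} (G : Fin n → Fin n → Prop) (b : ℝ) : Prop :=
  ∀ v : Fin n, b ≤ (outDeg G v : ℝ) ∧ b ≤ (inDeg G v : ℝ)

/-- `e⁺(A, B)`: number of edges directed from `A` to `B`. -/
noncomputable def eOut {n : ℕ} (G : Fin n → Fin n → Prop) (A B : Finset (Fin n)) : ℕ :=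
  ∑ a ∈ A, outDegOn G a B

/-- `s` is the vertex set of a cyclic triangle. -/
def IsCycTri {n : ℕ} (G : Fin n → Fin n → Prop) (s : Finset (Fin n)) : Prop :=
  ∃ a b c : Fin n, G a b ∧ G b c ∧ G c a ∧ s = {a, b, c}

/-- `s` is the vertex set of a transitive triangle. -/
def IsTrnTri {n : ℕ} (G : Fin n → Fin n → Prop) (s : Finset (Fin n)) : Prop :=
  ∃ a b c : Fin n, G a b ∧ G b c ∧ G a c ∧ s = {a, b, c}

/-- `cyc(A)`: number of cyclic triangles with all vertices in `A`. -/
noncomputable def cycIn {n : ℕ} (G : Fin n → Fin n → Prop) (A : Finset (Fin n)) : ℕ :=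
  ((A.powersetCard 3).filter fun s => IsCycTri G s).card

/-- `trn(A)`: number of transitive triangles with all vertices in `A`. -/
noncomputable def trnIn {n : ℕ} (G : Fin n → Fin n → Prop) (A : Finset (Fin n)) : ℕ :=
  ((A.powersetCard 3).filter fun s => IsTrnTri G s).card

/-- `cyc(A, B, C)`: number of cyclic triangles with one vertex in each of `A`, `B`, `C`
(in the sense of some labeling of its vertex set). -/
noncomputable def cyc3 {n : ℕ} (G : Fin n → Fin n → Prop) (A B C : Finset (Fin n)) : ℕ :=
  (((univ : Finset (Fin n)).powersetCard 3).filter fun s =>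
    IsCycTri G s ∧ ∃ x ∈ A, ∃ y ∈ B, ∃ z ∈ C, s = ({x, y, z} : Finset (Fin n))).card

/-- A cyclic triangle tiling: a collection of vertex-disjoint cyclic triangles. -/
def IsCycTiling {n : ℕ} (G : Fin n → Fin n → Prop) (C : Finset (Finset (Fin n))) : Prop :=
  (∀ s ∈ C, IsCycTri G s) ∧ ∀ s ∈ C, ∀ t ∈ C, s ≠ t → Disjoint s t

/-- A cyclic triangle factor: a tiling covering every vertex. -/
def IsCycFactor {n : ℕ} (G : Fin n → Fin n → Prop) (C : Finset (Finset (Fin n))) : Prop :=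
  IsCycTiling G C ∧ C.biUnion id = univ

/-- `W` can be perfectly covered by vertex-disjoint cyclic triangles
(i.e. `H(G)[W]` has a perfect matching). -/
def HasCycPM {n : ℕ} (G : Fin n → Fin n → Prop) (W : Finset (Fin n)) : Prop :=
  ∃ C : Finset (Finset (Fin n)), IsCycTiling G C ∧ C.biUnion id = W

/-- The number of `(H(G), x, y)`-linking `(3ℓ-1)`-sets. -/
noncomputable def linkCount {n : ℕ} (G : Fin n → Fin n → Prop) (ℓ : ℕ) (x y : Fin n) : ℕ :=
  (((univ : Finset (Fin n)).powersetCard (3 * ℓ - 1)).filter fun S =>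
    x ∉ S ∧ y ∉ S ∧ HasCycPM G (insert x S) ∧ HasCycPM G (insert y S)).card

variable {n : ℕ} {G : Fin n → Fin n → Prop}

lemma outDegOn_le_card {v : Fin n} {A : Finset (Fin n)} : outDegOn G v A ≤ A.card :=
  card_filter_le _ _

lemma inDegOn_le_card {v : Fin n} {A : Finset (Fin n)} : inDegOn G v A ≤ A.card :=
  card_filter_le _ _

lemma outDegOn_union {v : Fin n} {A B : Finset (Fin n)} (h : Disjoint A B) :
    outDegOn G v (A ∪ B) = outDegOn G v A + outDegOn G v B := by
  unfold outDegOn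
  rw [filter_union, card_union_of_disjoint (h.mono (filter_subset _ _) (filter_subset _ _))]

lemma inDegOn_union {v : Fin n} {A B : Finset (Fin n)} (h : Disjoint A B) :
    inDegOn G v (A ∪ B) = inDegOn G v A + inDegOn G v B := by
  unfold inDegOn
  rw [filter_union, card_union_of_disjoint (h.mono (filter_subset _ _) (filter_subset _ _))]

lemma outDegOn_mono {v : Fin n} {A B : Finset (Fin n)} (h : A ⊆ B) :
    outDegOn G v A ≤ outDegOn G v B :=
  card_le_card (filter_subset_filter _ h)

lemma inDegOn_mono {v : Fin n} {A B : Finset (Fin n)} (h : A ⊆ B) :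
    inDegOn G v A ≤ inDegOn G v B :=
  card_le_card (filter_subset_filter _ h)

lemma out_add_in_le (hG : IsOriented G) (v : Fin n) (A : Finset (Fin n)) :
    outDegOn G v A + inDegOn G v A ≤ A.card := by
  unfold outDegOn inDegOn
  rw [← card_union_of_disjoint]
  · exact card_le_card (by intro x hx; simp at hx; rcases hx with h | h <;> exact h.1)
  · rw [disjoint_left]
    intro x hx hx'
    simp at hx hx'
    exact hG.2 _ _ hx.2 hx'.2

lemma out_add_in_lt (hG : IsOriented G) {a : Fin n} {A : Finset (Fin n)} (ha : a ∈ A) :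
    outDegOn G a A + inDegOn G a A + 1 ≤ A.card := by
  have h := out_add_in_le hG a (A.erase a)
  have h1 : outDegOn G a A = outDegOn G a (A.erase a) := by
    unfold outDegOn
    congr 1
    apply Finset.ext
    intro x
    simp only [mem_filter, mem_erase]
    constructor
    · rintro ⟨hx, hgx⟩
      exact ⟨⟨fun he => hG.1 a (he ▸ hgx), hx⟩, hgx⟩
    · rintro ⟨⟨_, hx⟩, hgx⟩; exact ⟨hx, hgx⟩
  have h2 : inDegOn G a A = inDegOn G a (A.erase a) := by
    unfold inDegOn
    congr 1
    apply Finset.ext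
    intro x
    simp only [mem_filter, mem_erase]
    constructor
    · rintro ⟨hx, hgx⟩
      exact ⟨⟨fun he => hG.1 a (he ▸ hgx), hx⟩, hgx⟩
    · rintro ⟨⟨_, hx⟩, hgx⟩; exact ⟨hx, hgx⟩
  have h3 : (A.erase a).card + 1 = A.card := by
    rw [card_erase_of_mem ha]
    have := card_pos.mpr ⟨a, ha⟩
    omega
  omega

lemma handshake (hG : IsOriented G) (A : Finset (Fin n)) :
    2 * ∑ a ∈ A, outDegOn G a A + A.card ≤ A.card * A.card := by
  have hsw : ∑ a ∈ A, outDegOn G a A = ∑ a ∈ A, inDegOn G a A := by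
    unfold outDegOn inDegOn
    simp_rw [card_filter]
    exact Finset.sum_comm
  have h2 : ∑ a ∈ A, (outDegOn G a A + inDegOn G a A + 1) ≤ ∑ _a ∈ A, A.card :=
    Finset.sum_le_sum fun a ha => out_add_in_lt hG ha
  rw [Finset.sum_add_distrib, Finset.sum_add_distrib, ← hsw, Finset.sum_const, Finset.sum_const,
    smul_eq_mul, smul_eq_mul, mul_one] at h2
  omega

/-- L1: triangle existence in an oriented graph with large min semidegree on `W`. -/
lemma exists_cycTri (hG : IsOriented G) (W : Finset (Fin n)) (hne : W.Nonempty) (d : ℕ)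
    (hdeg : ∀ v ∈ W, d ≤ outDegOn G v W ∧ d ≤ inDegOn G v W)
    (hW : 2 * W.card ≤ 5 * d) :
    ∃ a ∈ W, ∃ b ∈ W, ∃ c ∈ W, G a b ∧ G b c ∧ G c a := by
  obtain ⟨v, hv⟩ := hne
  set A := W.filter (fun u => G v u) with hA
  set B := W.filter (fun u => G u v) with hB
  have hAcard : A.card = outDegOn G v W := rfl
  have hBcard : B.card = inDegOn G v W := rfl
  by_cases hab : ∃ a ∈ A, ∃ b ∈ B, G a b
  · obtain ⟨a, ha, b, hb, h⟩ := hab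
    rw [hA, mem_filter] at ha; rw [hB, mem_filter] at hb
    exact ⟨v, hv, a, ha.1, b, hb.1, ha.2, h, hb.2⟩
  push_neg at hab
  exfalso
  -- A is nonempty
  have hd1 : 1 ≤ d := by
    rcases Nat.eq_zero_or_pos d with h | h
    · subst h
      have hc := card_pos.mpr ⟨v, hv⟩
      omega
    · exact h
  have hAd : d ≤ A.card := by rw [hAcard]; exact (hdeg v hv).1
  have hBd : d ≤ B.card := by rw [hBcard]; exact (hdeg v hv).2
  have hAne : A.Nonempty := card_pos.mp (by omega)
  -- find a ∈ A with small out-degree inside A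
  have hsmall : ∃ a ∈ A, 2 * outDegOn G a A + 1 ≤ A.card := by
    by_contra hc
    push_neg at hc
    have : ∑ a ∈ A, A.card ≤ ∑ a ∈ A, 2 * outDegOn G a A := by
      apply Finset.sum_le_sum
      intro a ha
      have := hc a ha
      omega
    rw [Finset.sum_const, smul_eq_mul, ← Finset.mul_sum] at this
    have hh := handshake hG A
    have hApos : 0 < A.card := card_pos.mpr hAne
    nlinarith [this, hh]
  obtain ⟨a, haA, hsm⟩ := hsmall
  have haW : a ∈ W := (mem_filter.mp haA).1
  have hvA : G v a := (mem_filter.mp haA).2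
  -- decompose W
  have hABdisj : Disjoint A B := by
    rw [disjoint_left]
    intro x hx hx'
    rw [hA, mem_filter] at hx; rw [hB, mem_filter] at hx'
    exact hG.2 _ _ hx.2 hx'.2
  have hvAB : v ∉ A ∪ B := by
    rw [mem_union, hA, hB]
    rintro (h | h) <;> exact hG.1 v (mem_filter.mp h).2
  set X := A ∪ B ∪ {v} with hX
  have hXW : X ⊆ W := by
    rw [hX]
    intro x hx
    rw [mem_union, mem_union] at hx
    rcases hx with (h | h) | h
    · exact (mem_filter.mp h).1
    · exact (mem_filter.mp h).1
    · rw [mem_singleton] at h; subst h; exact hv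
  have hXcard : X.card = A.card + B.card + 1 := by
    rw [hX, card_union_of_disjoint, card_union_of_disjoint hABdisj]
    · simp
    · rw [disjoint_singleton_right]; exact hvAB
  -- out-neighbors of a in W
  have hdec : outDegOn G a W = outDegOn G a X + outDegOn G a (W \ X) := by
    rw [← outDegOn_union (disjoint_sdiff), union_sdiff_of_subset hXW]
  have hoX : outDegOn G a X ≤ outDegOn G a A := by
    have h1 : outDegOn G a X = outDegOn G a (A ∪ B) + outDegOn G a {v} := by
      rw [hX, outDegOn_union]
      rw [disjoint_singleton_right]; exact hvAB
    have h2 : outDegOn G a (A ∪ B) = outDegOn G a A + outDegOn G a B :=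
      outDegOn_union hABdisj
    have h3 : outDegOn G a B = 0 := by
      unfold outDegOn
      rw [card_eq_zero, filter_eq_empty_iff]
      exact fun b hb => hab a haA b hb
    have h4 : outDegOn G a {v} = 0 := by
      unfold outDegOn
      rw [card_eq_zero, filter_eq_empty_iff]
      intro b hb
      rw [mem_singleton] at hb; subst hb
      exact hG.2 _ _ hvA
    omega
  have hrest : outDegOn G a (W \ X) ≤ W.card - X.card := by
    calc outDegOn G a (W \ X) ≤ (W \ X).card := outDegOn_le_card
    _ = W.card - X.card := card_sdiff_of_subset hXW
  have hXle : X.card ≤ W.card := card_le_card hXW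
  have hda : d ≤ outDegOn G a W := (hdeg a haW).1
  omega

lemma hasCycPM_empty : HasCycPM G ∅ :=
  ⟨∅, ⟨fun s hs => absurd hs (notMem_empty s), fun s hs => absurd hs (notMem_empty s)⟩,
    biUnion_empty⟩

lemma subset_of_mem_tiling {C : Finset (Finset (Fin n))} {s : Finset (Fin n)} (hs : s ∈ C) :
    s ⊆ C.biUnion id := by
  intro x hx
  rw [mem_biUnion]
  exact ⟨s, hs, hx⟩

lemma hasCycPM_union {S1 S2 : Finset (Fin n)} (h1 : HasCycPM G S1) (h2 : HasCycPM G S2)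
    (hd : Disjoint S1 S2) : HasCycPM G (S1 ∪ S2) := by
  obtain ⟨C1, hC1, hB1⟩ := h1
  obtain ⟨C2, hC2, hB2⟩ := h2
  refine ⟨C1 ∪ C2, ⟨?_, ?_⟩, ?_⟩
  · intro s hs
    rcases mem_union.mp hs with h | h
    · exact hC1.1 s h
    · exact hC2.1 s h
  · intro s hs t ht hst
    rcases mem_union.mp hs with h | h <;> rcases mem_union.mp ht with h' | h'
    · exact hC1.2 s h t h' hst
    · exact hd.mono (hB1 ▸ subset_of_mem_tiling h) (hB2 ▸ subset_of_mem_tiling h')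
    · exact (hd.mono (hB1 ▸ subset_of_mem_tiling h') (hB2 ▸ subset_of_mem_tiling h)).symm
    · exact hC2.2 s h t h' hst
  · ext x
    simp only [mem_biUnion, mem_union, id]
    constructor
    · rintro ⟨s, hs | hs, hx⟩
      · exact Or.inl (hB1 ▸ mem_biUnion.mpr ⟨s, hs, hx⟩)
      · exact Or.inr (hB2 ▸ mem_biUnion.mpr ⟨s, hs, hx⟩)
    · rintro (hx | hx)
      · obtain ⟨s, hs, hx⟩ := mem_biUnion.mp (hB1 ▸ hx : x ∈ C1.biUnion id)
        exact ⟨s, Or.inl hs, hx⟩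
      · obtain ⟨s, hs, hx⟩ := mem_biUnion.mp (hB2 ▸ hx : x ∈ C2.biUnion id)
        exact ⟨s, Or.inr hs, hx⟩

lemma hasCycPM_triple (hG : IsOriented G) {a b c : Fin n} (hab : G a b) (hbc : G b c)
    (hca : G c a) : HasCycPM G {a, b, c} := by
  refine ⟨{({a, b, c} : Finset (Fin n))}, ⟨?_, ?_⟩, ?_⟩
  · intro s hs
    rw [mem_singleton] at hs
    exact ⟨a, b, c, hab, hbc, hca, hs⟩
  · intro s hs t ht hst
    rw [mem_singleton] at hs ht
    exact absurd (hs.trans ht.symm) hst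
  · rw [singleton_biUnion, id]

/-- L2: removing `k` disjoint cyclic triangles from `W`. -/
lemma exists_tiling (hG : IsOriented G) : ∀ (k : ℕ) (W : Finset (Fin n)) (d : ℕ),
    (∀ v ∈ W, d ≤ outDegOn G v W ∧ d ≤ inDegOn G v W) →
    2 * W.card + 15 * k ≤ 5 * d + 15 → 3 * k ≤ W.card →
    ∃ S, S ⊆ W ∧ S.card = 3 * k ∧ HasCycPM G S := by
  intro k
  induction k with
  | zero => exact fun W d _ _ _ => ⟨∅, empty_subset _, by simp, hasCycPM_empty⟩
  | succ k ih =>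
    intro W d hdeg hnum hcard
    have hne : W.Nonempty := card_pos.mp (by omega)
    obtain ⟨a, ha, b, hb, c, hc, hab, hbc, hca⟩ :=
      exists_cycTri hG W hne d hdeg (by omega)
    have hab' : a ≠ b := fun h => hG.1 b (h ▸ hab)
    have hbc' : b ≠ c := fun h => hG.1 c (h ▸ hbc)
    have hca' : c ≠ a := fun h => hG.1 a (h ▸ hca)
    set T : Finset (Fin n) := {a, b, c} with hT
    have hTcard : T.card = 3 := by
      rw [hT, card_insert_of_notMem, card_insert_of_notMem, card_singleton]
      · simp [hbc']
      · simp [hab', hca'.symm]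
    have hTW : T ⊆ W := by
      intro x hx
      rw [hT] at hx
      simp only [mem_insert, mem_singleton] at hx
      rcases hx with h | h | h <;> subst h <;> assumption
    set W' := W \ T with hW'
    have hdisj : Disjoint W' T := sdiff_disjoint
    have hsplit : W' ∪ T = W := sdiff_union_of_subset hTW
    have hW'card : W'.card + 3 = W.card := by
      rw [hW', card_sdiff_of_subset hTW, hTcard]
      have := card_le_card hTW
      omega
    have hdeg' : ∀ v ∈ W', d - 3 ≤ outDegOn G v W' ∧ d - 3 ≤ inDegOn G v W' := by
      intro v hv
      have hvW : v ∈ W := (mem_sdiff.mp hv).1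
      have h1 : outDegOn G v W = outDegOn G v W' + outDegOn G v T := by
        rw [← hsplit, outDegOn_union hdisj]
      have h2 : inDegOn G v W = inDegOn G v W' + inDegOn G v T := by
        rw [← hsplit, inDegOn_union hdisj]
      have h3 : outDegOn G v T ≤ 3 := hTcard ▸ outDegOn_le_card
      have h4 : inDegOn G v T ≤ 3 := by
        have : inDegOn G v T ≤ T.card := card_filter_le _ _
        omega
      have h5 := hdeg v hvW
      omega
    obtain ⟨S', hS'W, hS'card, hS'pm⟩ := ih W' (d - 3) hdeg' (by omega) (by omega)
    have hS'T : Disjoint S' T := hdisj.mono_left hS'W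
    refine ⟨S' ∪ T, ?_, ?_, hasCycPM_union hS'pm (hT ▸ hasCycPM_triple hG hab hbc hca) hS'T⟩
    · exact union_subset (hS'W.trans sdiff_subset) hTW
    · rw [card_union_of_disjoint hS'T, hS'card, hTcard]
      ring

/-- L4: Hall-type system of distinct representatives. -/
lemma hall_system (W1 W2 : Finset (Fin n)) (t r : ℕ) (P : Fin n → Fin n → Prop)
    (hc1 : W1.card = t) (hc2 : W2.card = t) (htr : 2 * r < t)
    (hx : ∀ x ∈ W1, ∀ N : Finset (Fin n), (∀ z, z ∈ N ↔ z ∈ W2 ∧ P x z) → t ≤ N.card + r)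
    (hy : ∀ y ∈ W2, ∀ N : Finset (Fin n), (∀ z, z ∈ N ↔ z ∈ W1 ∧ P z y) → t ≤ N.card + r) :
    ∃ f : Fin n → Fin n, Set.InjOn f W1 ∧ (∀ x ∈ W1, f x ∈ W2 ∧ P x (f x)) ∧
      W1.image f = W2 := by
  set T : {x // x ∈ W1} → Finset (Fin n) := fun x => W2.filter (P x.1) with hT
  have hall : ∀ s : Finset {x // x ∈ W1}, s.card ≤ (s.biUnion T).card := by
    intro s
    rcases s.eq_empty_or_nonempty with rfl | ⟨x0, hx0⟩
    · simp
    rcases le_or_gt (s.card + r) t with hle | hlt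
    · -- small case
      have h1 : T x0 ⊆ s.biUnion T := by
        intro y hy'
        exact mem_biUnion.mpr ⟨x0, hx0, hy'⟩
      have h2 := hx x0.1 x0.2 (T x0) (fun z => by rw [hT]; exact mem_filter)
      have h3 := card_le_card h1
      omega
    · -- big case: biUnion ⊇ W2
      have hsub : W2 ⊆ s.biUnion T := by
        intro y hyW2
        set s' : Finset (Fin n) := s.image (fun x => x.1) with hs'
        have hs'card : s'.card = s.card := card_image_of_injective _ Subtype.coe_injective
        have hs'sub : s' ⊆ W1 := by
          intro z hz
          obtain ⟨x, _, rfl⟩ := mem_image.mp hz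
          exact x.2
        set Xy := W1.filter (fun x => P x y) with hXy
        have hXycard := hy y hyW2 Xy (fun z => by rw [hXy]; exact mem_filter)
        have hint : (s' ∩ Xy).Nonempty := by
          rw [← card_pos]
          have hu : (s' ∪ Xy).card ≤ t := hc1 ▸ card_le_card
            (union_subset hs'sub (filter_subset _ _))
          have := card_inter_add_card_union s' Xy
          omega
        obtain ⟨z, hz⟩ := hint
        rw [mem_inter] at hz
        obtain ⟨x, hxs, hxz⟩ := mem_image.mp hz.1
        refine mem_biUnion.mpr ⟨x, hxs, ?_⟩
        rw [hT, mem_filter]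
        exact ⟨hyW2, by rw [hxz]; exact (mem_filter.mp hz.2).2⟩
      have := card_le_card hsub
      have hscard : s.card ≤ W1.card := by
        have := card_le_card (fun z hz => by
          obtain ⟨x, _, rfl⟩ := mem_image.mp hz
          exact x.2 : s.image (fun x => x.1) ⊆ W1)
        rwa [card_image_of_injective _ Subtype.coe_injective] at this
      omega
  obtain ⟨g, hginj, hgmem⟩ := (Finset.all_card_le_biUnion_card_iff_exists_injective T).mp hall
  classical
  refine ⟨fun x => if h : x ∈ W1 then g ⟨x, h⟩ else x, ?_, ?_, ?_⟩
  · intro x hxW y hyW hxy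
    simp only [dif_pos (by exact hxW : x ∈ W1), dif_pos (by exact hyW : y ∈ W1)] at hxy
    exact Subtype.mk_eq_mk.mp (hginj hxy)
  · intro x hxW
    simp only [dif_pos hxW]
    have := hgmem ⟨x, hxW⟩
    rw [hT, mem_filter] at this
    exact this
  · apply eq_of_subset_of_card_le
    · intro y hy'
      obtain ⟨x, hxW, rfl⟩ := mem_image.mp hy'
      simp only [dif_pos hxW]
      exact (mem_filter.mp (hgmem ⟨x, hxW⟩)).1
    · rw [card_image_of_injOn, hc1, hc2]
      intro x hxW y hyW hxy
      simp only [mem_coe] at hxW hyW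
      simp only [dif_pos (by exact hxW : x ∈ W1), dif_pos (by exact hyW : y ∈ W1)] at hxy
      exact Subtype.mk_eq_mk.mp (hginj hxy)

lemma preimage_card_le {f : Fin n → Fin n} {W1 W2 N : Finset (Fin n)}
    (him : W1.image f = W2) (hN : N ⊆ W2) :
    N.card ≤ (W1.filter (fun x => f x ∈ N)).card := by
  have h : N ⊆ (W1.filter (fun x => f x ∈ N)).image f := by
    intro y hyN
    obtain ⟨x, hxW, rfl⟩ := mem_image.mp (him ▸ hN hyN)
    exact mem_image.mpr ⟨x, mem_filter.mpr ⟨hxW, hyN⟩, rfl⟩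
  calc N.card ≤ ((W1.filter (fun x => f x ∈ N)).image f).card := card_le_card h
  _ ≤ _ := card_image_le

/-- L5: triangle factor of a nearly-complete cyclically-oriented tripartite graph. -/
lemma tripartite_factor (hG : IsOriented G) (W1 W2 W3 : Finset (Fin n)) (t r : ℕ)
    (h12 : Disjoint W1 W2) (h13 : Disjoint W1 W3) (h23 : Disjoint W2 W3)
    (hc1 : W1.card = t) (hc2 : W2.card = t) (hc3 : W3.card = t)
    (htr : 4 * r < t)
    (d12 : ∀ x ∈ W1, t ≤ outDegOn G x W2 + r)
    (d23 : ∀ x ∈ W2, t ≤ outDegOn G x W3 + r)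
    (d31 : ∀ x ∈ W3, t ≤ outDegOn G x W1 + r)
    (d13 : ∀ x ∈ W1, t ≤ inDegOn G x W3 + r)
    (d21 : ∀ x ∈ W2, t ≤ inDegOn G x W1 + r)
    (d32 : ∀ x ∈ W3, t ≤ inDegOn G x W2 + r) :
    HasCycPM G (W1 ∪ W2 ∪ W3) := by
  -- first Hall system : f : W1 → W2 along edges of G
  obtain ⟨f, hfinj, hfmem, hfim⟩ := hall_system W1 W2 t r (fun x y => G x y) hc1 hc2
    (by omega)
    (fun x hx N hN => by
      have hNe : N.card = outDegOn G x W2 := by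
        unfold outDegOn
        congr 1
        ext z
        rw [hN z]
        exact (mem_filter (s := W2) (p := fun u => G x u)).symm
      have := d12 x hx
      omega)
    (fun y hy N hN => by
      have hNe : N.card = inDegOn G y W1 := by
        unfold inDegOn
        congr 1
        ext z
        rw [hN z]
        exact (mem_filter (s := W1) (p := fun u => G u y)).symm
      have := d21 y hy
      omega)
  -- second Hall system : g : W1 → W3 with G (f x) (g x) and G (g x) x
  obtain ⟨g, hginj, hgmem, hgim⟩ := hall_system W1 W3 t (2 * r)
    (fun x z => G (f x) z ∧ G z x) hc1 hc3 (by omega)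
    (fun x hx N hN => by
      have hfx := hfmem x hx
      have h1 := d23 (f x) hfx.1
      have h2 := d13 x hx
      have hfeq : N = (W3.filter (fun z => G (f x) z)) ∩ (W3.filter (fun z => G z x)) := by
        ext z
        rw [hN z, mem_inter, mem_filter, mem_filter]
        tauto
      have hu : ((W3.filter (fun z => G (f x) z)) ∪ (W3.filter (fun z => G z x))).card ≤ t :=
        hc3 ▸ card_le_card (union_subset (filter_subset _ _) (filter_subset _ _))
      have hiu := card_inter_add_card_union
        (W3.filter (fun z => G (f x) z)) (W3.filter (fun z => G z x))
      unfold outDegOn at h1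
      unfold inDegOn at h2
      rw [hfeq]
      omega)
    (fun z hz N hN => by
      have h1 : t ≤ inDegOn G z W2 + r := d32 z hz
      have h2 : t ≤ outDegOn G z W1 + r := d31 z hz
      have h3 : inDegOn G z W2 ≤
          (W1.filter (fun x => f x ∈ W2.filter (fun y => G y z))).card := by
        have h := preimage_card_le hfim
          (filter_subset (fun y => G y z) W2)
        exact h
      have h2' : (W1.filter (fun x => G z x)).card = outDegOn G z W1 := rfl
      have hsub : (W1.filter (fun x => f x ∈ W2.filter (fun y => G y z)))
          ∩ (W1.filter (fun x => G z x)) ⊆ N := by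
        intro x hx
        simp only [mem_inter, mem_filter] at hx
        obtain ⟨⟨hxW, hfxN⟩, -, hzx⟩ := hx
        exact (hN x).mpr ⟨hxW, hfxN.2, hzx⟩
      have hcard := card_le_card hsub
      have hu : ((W1.filter (fun x => f x ∈ W2.filter (fun y => G y z)))
          ∪ (W1.filter (fun x => G z x))).card ≤ t :=
        hc1 ▸ card_le_card (union_subset (filter_subset _ _) (filter_subset _ _))
      have hiu := card_inter_add_card_union
        (W1.filter (fun x => f x ∈ W2.filter (fun y => G y z)))
        (W1.filter (fun x => G z x))
      omega)
  -- build the triangles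
  set Tr : Fin n → Finset (Fin n) := fun x => {x, f x, g x} with hTr
  refine ⟨W1.image Tr, ⟨?_, ?_⟩, ?_⟩
  · intro s hs
    obtain ⟨x, hx, rfl⟩ := mem_image.mp hs
    exact ⟨x, f x, g x, (hfmem x hx).2, (hgmem x hx).2.1, (hgmem x hx).2.2, rfl⟩
  · intro s hs s' hs' hne
    obtain ⟨x, hx, rfl⟩ := mem_image.mp hs
    obtain ⟨x', hx', rfl⟩ := mem_image.mp hs'
    have hxx' : x ≠ x' := fun h => hne (h ▸ rfl)
    have hfx := (hfmem x hx).1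
    have hfx' := (hfmem x' hx').1
    have hgx := (hgmem x hx).1
    have hgx' := (hgmem x' hx').1
    rw [disjoint_left]
    intro e he he'
    simp only [hTr, mem_insert, mem_singleton] at he he'
    rcases he with rfl | rfl | rfl <;> rcases he' with h | h | h
    · exact hxx' h
    · exact disjoint_left.mp h12 hx (h ▸ hfx')
    · exact disjoint_left.mp h13 hx (h ▸ hgx')
    · exact disjoint_left.mp h12 hx' (h.symm ▸ hfx)
    · exact hxx' (hfinj hx hx' h)
    · exact disjoint_left.mp h23 (h ▸ hfx) hgx'
    · exact disjoint_left.mp h13 hx' (h.symm ▸ hgx)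
    · exact disjoint_left.mp h23 hfx' (h.symm ▸ hgx)
    · exact hxx' (hginj hx hx' h)
  · apply Finset.ext
    intro e
    rw [mem_biUnion]
    constructor
    · rintro ⟨s, hs, hes⟩
      obtain ⟨x, hx, rfl⟩ := mem_image.mp hs
      simp only [id, hTr, mem_insert, mem_singleton] at hes
      rcases hes with rfl | rfl | rfl
      · exact mem_union.mpr (Or.inl (mem_union.mpr (Or.inl hx)))
      · exact mem_union.mpr (Or.inl (mem_union.mpr (Or.inr (hfmem x hx).1)))
      · exact mem_union.mpr (Or.inr (hgmem x hx).1)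
    · intro he
      rcases mem_union.mp he with he' | he'
      · rcases mem_union.mp he' with h1 | h2
        · exact ⟨Tr e, mem_image_of_mem _ h1, by simp [hTr]⟩
        · obtain ⟨x, hx, rfl⟩ := mem_image.mp (hfim ▸ h2 : _ ∈ W1.image f)
          exact ⟨Tr x, mem_image_of_mem _ hx, by simp [hTr]⟩
      · obtain ⟨x, hx, rfl⟩ := mem_image.mp (hgim ▸ he' : _ ∈ W1.image g)
        exact ⟨Tr x, mem_image_of_mem _ hx, by simp [hTr]⟩

/-- Inner-part semidegree bound. -/
lemma inner_deg {A B C : Finset (Fin n)} (hG : IsOriented G)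
    (hAB : Disjoint A B) (hAC : Disjoint A C) (hBC : Disjoint B C)
    (hu : A ∪ B ∪ C = univ) {v : Fin n} (hv : v ∈ A) {β δ : ℝ}
    (ho : δ ≤ (outDeg G v : ℝ)) (hi : δ ≤ (inDeg G v : ℝ))
    (hoB : β ≤ (outDegOn G v B : ℝ)) (hiC : β ≤ (inDegOn G v C : ℝ)) :
    (A.card : ℝ) + δ + β - n ≤ (outDegOn G v A : ℝ) ∧
      (A.card : ℝ) + δ + β - n ≤ (inDegOn G v A : ℝ) := by
  have hABC : Disjoint (A ∪ B) C := disjoint_union_left.mpr ⟨hAC, hBC⟩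
  have s1 : outDeg G v = outDegOn G v A + outDegOn G v B + outDegOn G v C := by
    unfold outDeg
    rw [← hu, outDegOn_union hABC, outDegOn_union hAB]
  have s2 : inDeg G v = inDegOn G v A + inDegOn G v B + inDegOn G v C := by
    unfold inDeg
    rw [← hu, inDegOn_union hABC, inDegOn_union hAB]
  have s3 := out_add_in_le hG v C
  have s4 := out_add_in_le hG v B
  have s5 : A.card + B.card + C.card = n := by
    have h1 : (A ∪ B ∪ C).card = n := by rw [hu, card_univ, Fintype.card_fin]
    rw [card_union_of_disjoint hABC, card_union_of_disjoint hAB] at h1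
    exact h1
  have c1 : (outDeg G v : ℝ)
      = (outDegOn G v A : ℝ) + outDegOn G v B + outDegOn G v C := by exact_mod_cast s1
  have c2 : (inDeg G v : ℝ)
      = (inDegOn G v A : ℝ) + inDegOn G v B + inDegOn G v C := by exact_mod_cast s2
  have c3 : (outDegOn G v C : ℝ) + inDegOn G v C ≤ (C.card : ℝ) := by exact_mod_cast s3
  have c4 : (outDegOn G v B : ℝ) + inDegOn G v B ≤ (B.card : ℝ) := by exact_mod_cast s4
  have c5 : (A.card : ℝ) + B.card + C.card = n := by exact_mod_cast s5
  have c6 : (outDegOn G v B : ℝ) ≤ B.card := by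
    exact_mod_cast (outDegOn_le_card (v := v) (A := B))
  have c7 : (inDegOn G v C : ℝ) ≤ C.card := by
    exact_mod_cast (inDegOn_le_card (v := v) (A := C))
  constructor <;> linarith

/-- Transfer a degree bound from `V` to `V` minus a small set. -/
lemma deg_transfer {dV dW b t r : ℕ} {β : ℝ}
    (h1 : dV ≤ dW + (b - t)) (ht : t ≤ b) (h2 : β ≤ (dV : ℝ)) (h3 : (b : ℝ) ≤ β + r) :
    t ≤ dW + r := by
  have hb : (b : ℝ) - t = ((b - t : ℕ) : ℝ) := by
    rw [Nat.cast_sub ht]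
  have h1' : (dV : ℝ) ≤ (dW : ℝ) + ((b - t : ℕ) : ℝ) := by exact_mod_cast h1
  have : (t : ℝ) ≤ (dW : ℝ) + r := by linarith [hb ▸ h1']
  exact_mod_cast this

lemma split_le_out {x : Fin n} {S V : Finset (Fin n)} (hS : S ⊆ V) :
    outDegOn G x V ≤ outDegOn G x (V \ S) + S.card := by
  have h := outDegOn_union (G := G) (v := x) (sdiff_disjoint : Disjoint (V \ S) S)
  rw [sdiff_union_of_subset hS] at h
  rw [h]
  exact Nat.add_le_add_left outDegOn_le_card _

lemma split_le_in {x : Fin n} {S V : Finset (Fin n)} (hS : S ⊆ V) :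
    inDegOn G x V ≤ inDegOn G x (V \ S) + S.card := by
  have h := inDegOn_union (G := G) (v := x) (sdiff_disjoint : Disjoint (V \ S) S)
  rw [sdiff_union_of_subset hS] at h
  rw [h]
  exact Nat.add_le_add_left inDegOn_le_card _

lemma sdiff_cover {V S : Finset (Fin n)} {x : Fin n} (hx : x ∈ V) : x ∈ S ∨ x ∈ V \ S := by
  by_cases h : x ∈ S
  · exact Or.inl h
  · exact Or.inr (mem_sdiff.mpr ⟨hx, h⟩)

set_option maxHeartbeats 1000000 in
theorem stmt_13 :
    ∃ ε > (0:ℝ), ∀ c ξ : ℝ, 0 < c → c ≤ ε → 0 < ξ → ξ ≤ ε →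
    ∃ N : ℕ, ∀ n : ℕ, N ≤ n → 3 ∣ n → ∀ G : Fin n → Fin n → Prop, IsOriented G →
      MinSemidegreeGE G ((1/2 - c) * n) →
      ∀ V1 V2 V3 : Finset (Fin n),
        Disjoint V1 V2 → Disjoint V1 V3 → Disjoint V2 V3 → V1 ∪ V2 ∪ V3 = univ →
        V1.card % 3 = V2.card % 3 → V2.card % 3 = V3.card % 3 →
        (∀ v ∈ V1, (1/3 - ξ) * n ≤ (outDegOn G v V2 : ℝ) ∧
          (1/3 - ξ) * n ≤ (inDegOn G v V3 : ℝ)) →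
        (∀ v ∈ V2, (1/3 - ξ) * n ≤ (outDegOn G v V3 : ℝ) ∧
          (1/3 - ξ) * n ≤ (inDegOn G v V1 : ℝ)) →
        (∀ v ∈ V3, (1/3 - ξ) * n ≤ (outDegOn G v V1 : ℝ) ∧
          (1/3 - ξ) * n ≤ (inDegOn G v V2 : ℝ)) →
        ∃ C : Finset (Finset (Fin n)), IsCycFactor G C := by
  refine ⟨1/200, by norm_num, ?_⟩
  intro c ξ hc hcε hξ hξε
  refine ⟨100, ?_⟩
  intro n hn h3n G hG hmin V1 V2 V3 h12 h13 h23 hunion m1 m2 deg1 deg2 deg3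
  have hn0 : 0 < n := by omega
  have hnR : (100 : ℝ) ≤ n := by exact_mod_cast hn
  have hnR0 : (0 : ℝ) < n := by linarith
  -- sizes
  have hABC : Disjoint (V1 ∪ V2) V3 := disjoint_union_left.mpr ⟨h13, h23⟩
  have hsum : V1.card + V2.card + V3.card = n := by
    have h1 : (V1 ∪ V2 ∪ V3).card = n := by rw [hunion, card_univ, Fintype.card_fin]
    rw [card_union_of_disjoint hABC, card_union_of_disjoint h12] at h1
    exact h1
  -- all parts are nonempty
  have hβpos : (0 : ℝ) < (1/3 - ξ) * n := by nlinarith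
  have hne_of : ∀ (V : Finset (Fin n)) (d : ℕ), (1/3 - ξ) * n ≤ (d : ℝ) → d ≤ V.card →
      V.Nonempty := by
    intro V d h hle
    rw [← card_pos]
    have h2 : (0 : ℝ) < (V.card : ℝ) :=
      lt_of_lt_of_le hβpos (le_trans h (by exact_mod_cast hle))
    exact_mod_cast h2
  have hsomene : V1.Nonempty ∨ V2.Nonempty ∨ V3.Nonempty := by
    by_contra h
    push_neg at h
    rw [h.1, h.2.1, h.2.2] at hsum
    simp at hsum
    omega
  have step12 : V1.Nonempty → V2.Nonempty := fun ⟨v, hv⟩ =>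
    hne_of V2 (outDegOn G v V2) (deg1 v hv).1 outDegOn_le_card
  have step23 : V2.Nonempty → V3.Nonempty := fun ⟨v, hv⟩ =>
    hne_of V3 (outDegOn G v V3) (deg2 v hv).1 outDegOn_le_card
  have step31 : V3.Nonempty → V1.Nonempty := fun ⟨v, hv⟩ =>
    hne_of V1 (outDegOn G v V1) (deg3 v hv).1 outDegOn_le_card
  have hne1 : V1.Nonempty := by
    rcases hsomene with h | h | h
    · exact h
    · exact step31 (step23 h)
    · exact step31 h
  have hne2 : V2.Nonempty := step12 hne1
  have hne3 : V3.Nonempty := step23 hne2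
  -- size bounds (lower)
  have hlow1 : (1/3 - ξ) * n ≤ (V1.card : ℝ) := by
    obtain ⟨v, hv⟩ := hne3
    exact le_trans (deg3 v hv).1
      (by exact_mod_cast (outDegOn_le_card (G := G) (v := v) (A := V1)))
  have hlow2 : (1/3 - ξ) * n ≤ (V2.card : ℝ) := by
    obtain ⟨v, hv⟩ := hne1
    exact le_trans (deg1 v hv).1
      (by exact_mod_cast (outDegOn_le_card (G := G) (v := v) (A := V2)))
  have hlow3 : (1/3 - ξ) * n ≤ (V3.card : ℝ) := by
    obtain ⟨v, hv⟩ := hne2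
    exact le_trans (deg2 v hv).1
      (by exact_mod_cast (outDegOn_le_card (G := G) (v := v) (A := V3)))
  have hsumR : (V1.card : ℝ) + V2.card + V3.card = n := by exact_mod_cast hsum
  have hup1 : (V1.card : ℝ) ≤ (1/3 + 2*ξ) * n := by linarith
  have hup2 : (V2.card : ℝ) ≤ (1/3 + 2*ξ) * n := by linarith
  have hup3 : (V3.card : ℝ) ≤ (1/3 + 2*ξ) * n := by linarith
  -- the common size t
  set t := min V1.card (min V2.card V3.card) with hht
  have ht1 : t ≤ V1.card := min_le_left _ _
  have ht2 : t ≤ V2.card := le_trans (min_le_right _ _) (min_le_left _ _)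
  have ht3 : t ≤ V3.card := le_trans (min_le_right _ _) (min_le_right _ _)
  have hteq : t = V1.card ∨ t = V2.card ∨ t = V3.card := by
    rcases min_cases V1.card (min V2.card V3.card) with ⟨h, -⟩ | ⟨h, -⟩
    · exact Or.inl h
    · rcases min_cases V2.card V3.card with ⟨h', -⟩ | ⟨h', -⟩
      · exact Or.inr (Or.inl (h.trans h'))
      · exact Or.inr (Or.inr (h.trans h'))
  have htlow : (1/3 - ξ) * n ≤ (t : ℝ) := by
    rcases hteq with h | h | h <;> rw [h] <;> assumption
  have htup : (t : ℝ) ≤ (1/3 + 2*ξ) * n := by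
    rcases hteq with h | h | h <;> rw [h] <;> assumption
  have hξn : ξ * n ≤ (1/200) * n := mul_le_mul_of_nonneg_right hξε (le_of_lt hnR0)
  have hcn : c * n ≤ (1/200) * n := mul_le_mul_of_nonneg_right hcε (le_of_lt hnR0)
  -- generic removal of triangles inside one part
  have main_remove : ∀ A B C : Finset (Fin n), Disjoint A B → Disjoint A C → Disjoint B C →
      A ∪ B ∪ C = univ →
      (∀ v ∈ A, (1/3 - ξ) * n ≤ (outDegOn G v B : ℝ) ∧ (1/3 - ξ) * n ≤ (inDegOn G v C : ℝ)) →
      (A.card : ℝ) ≤ (1/3 + 2*ξ) * n →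
      ∀ k : ℕ, 3 * k + t = A.card →
      ∃ S, S ⊆ A ∧ S.card + t = A.card ∧ HasCycPM G S := by
    intro A B C dAB dAC dBC hu hdeg hupA k hk
    set D : ℝ := (A.card : ℝ) + ((1/2 - c) * n) + ((1/3 - ξ) * n) - n with hD
    set d : ℕ := ⌈D⌉₊ with hd
    have hdeg' : ∀ v ∈ A, d ≤ outDegOn G v A ∧ d ≤ inDegOn G v A := by
      intro v hv
      obtain ⟨hoB, hiC⟩ := hdeg v hv
      obtain ⟨h1, h2⟩ := inner_deg hG dAB dAC dBC hu hv (hmin v).1 (hmin v).2 hoB hiC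
      exact ⟨Nat.ceil_le.mpr h1, Nat.ceil_le.mpr h2⟩
    have hnum : 2 * A.card + 15 * k ≤ 5 * d + 15 := by
      have hdD : D ≤ (d : ℝ) := Nat.le_ceil D
      have hkR : (3 * k : ℝ) = (A.card : ℝ) - t := by
        have : (3 * k : ℕ) = A.card - t := by omega
        have h2 : ((3 * k : ℕ) : ℝ) = ((A.card - t : ℕ) : ℝ) := by exact_mod_cast this
        rw [Nat.cast_sub (by omega : t ≤ A.card)] at h2
        exact_mod_cast h2
      have hreal : (2 * A.card + 15 * k : ℝ) ≤ 5 * (d : ℝ) + 15 := by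
        rw [hD] at hdD
        linarith
      exact_mod_cast hreal
    obtain ⟨S, hS, hScard, hSpm⟩ := exists_tiling hG k A d hdeg' hnum (by omega)
    exact ⟨S, hS, by omega, hSpm⟩
  -- remove triangles from each part
  obtain ⟨S1, hS1sub, hS1card, hS1pm⟩ := main_remove V1 V2 V3 h12 h13 h23 hunion deg1 hup1
    ((V1.card - t) / 3) (by rcases hteq with h | h | h <;> omega)
  obtain ⟨S2, hS2sub, hS2card, hS2pm⟩ := main_remove V2 V3 V1 h23 h12.symm h13.symm
    (by rw [← hunion]; ext x; simp [mem_union]; tauto) deg2 hup2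
    ((V2.card - t) / 3) (by rcases hteq with h | h | h <;> omega)
  obtain ⟨S3, hS3sub, hS3card, hS3pm⟩ := main_remove V3 V1 V2 h13.symm h23.symm h12
    (by rw [← hunion]; ext x; simp [mem_union]; tauto) deg3 hup3
    ((V3.card - t) / 3) (by rcases hteq with h | h | h <;> omega)
  -- the balanced remainder
  set W1 := V1 \ S1 with hW1
  set W2 := V2 \ S2 with hW2
  set W3 := V3 \ S3 with hW3
  have hW1V : W1 ⊆ V1 := sdiff_subset
  have hW2V : W2 ⊆ V2 := sdiff_subset
  have hW3V : W3 ⊆ V3 := sdiff_subset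
  have hW1card : W1.card = t := by
    rw [hW1, card_sdiff_of_subset hS1sub]; omega
  have hW2card : W2.card = t := by
    rw [hW2, card_sdiff_of_subset hS2sub]; omega
  have hW3card : W3.card = t := by
    rw [hW3, card_sdiff_of_subset hS3sub]; omega
  -- the error parameter r
  set r : ℕ := ⌈3 * ξ * (n : ℝ)⌉₊ with hr
  have hr3 : 3 * ξ * n ≤ (r : ℝ) := Nat.le_ceil _
  have hrup : (r : ℝ) < 3 * ξ * n + 1 := Nat.ceil_lt_add_one (by positivity)
  have htr : 4 * r < t := by
    have : (4 * r : ℝ) < (t : ℝ) := by linarith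
    exact_mod_cast this
  -- cards of removed sets
  have hS1c : S1.card = V1.card - t := by omega
  have hS2c : S2.card = V2.card - t := by omega
  have hS3c : S3.card = V3.card - t := by omega
  have hbound : ∀ (V : Finset (Fin n)), (V.card : ℝ) ≤ (1/3 + 2*ξ) * n →
      (V.card : ℝ) ≤ (1/3 - ξ) * n + r := by
    intro V h
    linarith
  -- six degree conditions
  have d12 : ∀ x ∈ W1, t ≤ outDegOn G x W2 + r := fun x hx =>
    deg_transfer (hS2c ▸ split_le_out hS2sub) ht2 (deg1 x (hW1V hx)).1 (hbound V2 hup2)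
  have d13 : ∀ x ∈ W1, t ≤ inDegOn G x W3 + r := fun x hx =>
    deg_transfer (hS3c ▸ split_le_in hS3sub) ht3 (deg1 x (hW1V hx)).2 (hbound V3 hup3)
  have d23 : ∀ x ∈ W2, t ≤ outDegOn G x W3 + r := fun x hx =>
    deg_transfer (hS3c ▸ split_le_out hS3sub) ht3 (deg2 x (hW2V hx)).1 (hbound V3 hup3)
  have d21 : ∀ x ∈ W2, t ≤ inDegOn G x W1 + r := fun x hx =>
    deg_transfer (hS1c ▸ split_le_in hS1sub) ht1 (deg2 x (hW2V hx)).2 (hbound V1 hup1)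
  have d31 : ∀ x ∈ W3, t ≤ outDegOn G x W1 + r := fun x hx =>
    deg_transfer (hS1c ▸ split_le_out hS1sub) ht1 (deg3 x (hW3V hx)).1 (hbound V1 hup1)
  have d32 : ∀ x ∈ W3, t ≤ inDegOn G x W2 + r := fun x hx =>
    deg_transfer (hS2c ▸ split_le_in hS2sub) ht2 (deg3 x (hW3V hx)).2 (hbound V2 hup2)
  have hWpm : HasCycPM G (W1 ∪ W2 ∪ W3) :=
    tripartite_factor hG W1 W2 W3 t r (h12.mono hW1V hW2V) (h13.mono hW1V hW3V)
      (h23.mono hW2V hW3V) hW1card hW2card hW3card htr d12 d23 d31 d13 d21 d32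
  -- assemble everything
  have hdSW : Disjoint S3 (W1 ∪ W2 ∪ W3) := by
    rw [disjoint_union_right, disjoint_union_right]
    exact ⟨⟨(h13.symm.mono hS3sub hW1V), (h23.symm.mono hS3sub hW2V)⟩,
      sdiff_disjoint.symm⟩
  have hpm3 : HasCycPM G (S3 ∪ (W1 ∪ W2 ∪ W3)) := hasCycPM_union hS3pm hWpm hdSW
  have hdS2 : Disjoint S2 (S3 ∪ (W1 ∪ W2 ∪ W3)) := by
    rw [disjoint_union_right, disjoint_union_right, disjoint_union_right]
    exact ⟨h23.mono hS2sub hS3sub,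
      ⟨h12.symm.mono hS2sub hW1V, sdiff_disjoint.symm⟩, h23.mono hS2sub hW3V⟩
  have hpm2 : HasCycPM G (S2 ∪ (S3 ∪ (W1 ∪ W2 ∪ W3))) := hasCycPM_union hS2pm hpm3 hdS2
  have hdS1 : Disjoint S1 (S2 ∪ (S3 ∪ (W1 ∪ W2 ∪ W3))) := by
    rw [disjoint_union_right, disjoint_union_right, disjoint_union_right,
      disjoint_union_right]
    exact ⟨h12.mono hS1sub hS2sub, h13.mono hS1sub hS3sub,
      ⟨sdiff_disjoint.symm, h12.mono hS1sub hW2V⟩, h13.mono hS1sub hW3V⟩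
  have hpm1 : HasCycPM G (S1 ∪ (S2 ∪ (S3 ∪ (W1 ∪ W2 ∪ W3)))) := hasCycPM_union hS1pm hpm2 hdS1
  have huniv : S1 ∪ (S2 ∪ (S3 ∪ (W1 ∪ W2 ∪ W3))) = univ := by
    apply eq_univ_of_forall
    intro x
    have hx : x ∈ V1 ∪ V2 ∪ V3 := by rw [hunion]; exact mem_univ x
    rcases mem_union.mp hx with hx' | hx3
    · rcases mem_union.mp hx' with hx1 | hx2
      · rcases sdiff_cover (S := S1) hx1 with h | h
        · exact mem_union_left _ h
        · exact mem_union_right _ (mem_union_right _ (mem_union_right _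
            (mem_union_left _ (mem_union_left _ h))))
      · rcases sdiff_cover (S := S2) hx2 with h | h
        · exact mem_union_right _ (mem_union_left _ h)
        · exact mem_union_right _ (mem_union_right _ (mem_union_right _
            (mem_union_left _ (mem_union_right _ h))))
    · rcases sdiff_cover (S := S3) hx3 with h | h
      · exact mem_union_right _ (mem_union_right _ (mem_union_left _ h))
      · exact mem_union_right _ (mem_union_right _ (mem_union_right _
          (mem_union_right _ h)))
  rw [huniv] at hpm1
  obtain ⟨C, hC1, hC2⟩ := hpm1
  exact ⟨C, hC1, hC2⟩
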